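/- For any c ≥ 0, the number of n-CNakayama algebras whose Kupisch series has minimal entry c+2 equals the number of balanced binary n-necklaces, which is (1/(2n)) * Σ_{k | n} φ(n/k) * binomial(2k,k), where φ is Euler's totient function. -/

import Mathlib

namespace Nak

/-! ### Stars and bars -/

lemma count_sum_nsmul {α : Type*} [Fintype α] [DecidableEq α] (a : α → ℕ) (j : α) :
    Multiset.count j (∑ i : α, (a i) • ({i} : Multiset α)) = a j := by
  rw [Multiset.count_sum']
  simp [Multiset.count_singleton]

lemma sum_count_nsmul {α : Type*} [Fintype α] [DecidableEq α] (s : Multiset α) :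
    ∑ i : α, (s.count i) • ({i} : Multiset α) = s := by
  have h1 : ∑ i ∈ s.toFinset, (s.count i) • ({i} : Multiset α)
      = ∑ i : α, (s.count i) • ({i} : Multiset α) := by
    apply Finset.sum_subset (Finset.subset_univ _)
    intro x _ hx
    simp [Multiset.count_eq_zero_of_notMem (fun h => hx (Multiset.mem_toFinset.2 h))]
  rw [← h1, Multiset.toFinset_sum_count_nsmul_eq]

lemma card_multiset_sum {α : Type*} [Fintype α] [DecidableEq α] (a : α → ℕ) :
    Multiset.card (∑ i : α, (a i) • ({i} : Multiset α)) = ∑ i, a i := by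
  have := map_sum (⟨⟨Multiset.card, Multiset.card_zero⟩, Multiset.card_add⟩ : Multiset α →+ ℕ)
    (fun i : α => a i • ({i} : Multiset α)) Finset.univ
  simpa using this

/-- Stars and bars equivalence. -/
def equivSym (α : Type*) [Fintype α] [DecidableEq α] (k : ℕ) :
    {a : α → ℕ // ∑ i, a i = k} ≃ Sym α k where
  toFun a := ⟨∑ i : α, (a.1 i) • ({i} : Multiset α), by rw [card_multiset_sum]; exact a.2⟩
  invFun s := ⟨fun i => s.1.count i, by
    have := card_multiset_sum (fun i => s.1.count i)
    rw [sum_count_nsmul] at this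
    rw [← this, s.2]⟩
  left_inv a := by ext i; exact count_sum_nsmul a.1 i
  right_inv s := Subtype.ext (sum_count_nsmul s.1)

lemma card_sum_eq (α : Type*) [Fintype α] [DecidableEq α] (k : ℕ) :
    Nat.card {a : α → ℕ // ∑ i, a i = k} = (Fintype.card α + k - 1).choose k := by
  rw [Nat.card_congr (equivSym α k), Nat.card_eq_fintype_card, Sym.card_sym_eq_choose]

/-! ### Kupisch series and the step bijection -/

abbrev S (n m : ℕ) := {c : ZMod n → ℕ // (∀ i, 2 ≤ c i) ∧
          (∀ i, c i ≤ c (i + 1) + 1) ∧ (∀ i, m + 2 ≤ c i) ∧ ∃ i, c i = m + 2}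

lemma sum_univ_zmod {d : ℕ} [NeZero d] (f : ZMod d → ℤ) :
    ∑ j ∈ Finset.range d, f (j : ZMod d) = ∑ i : ZMod d, f i := by
  apply Finset.sum_nbij' (i := fun j => ((j : ℕ) : ZMod d)) (j := fun i => i.val)
  · intro x _; exact Finset.mem_univ _
  · intro x _; exact Finset.mem_range.2 (ZMod.val_lt x)
  · intro x hx; rw [ZMod.val_natCast, Nat.mod_eq_of_lt (Finset.mem_range.1 hx)]
  · intro x _; exact ZMod.natCast_zmod_val x
  · intro x _; rfl

noncomputable def equivSteps (d m : ℕ) [NeZero d] :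
    S d m ≃ {a : ZMod d → ℕ // ∑ i, a i = d} := by
  have hval : ∀ i : ZMod d, (i + 1).val = (i.val + 1) % d := by
    intro i
    conv_lhs => rw [← ZMod.natCast_zmod_val i]
    rw [← Nat.cast_one, ← Nat.cast_add, ZMod.val_natCast]
  refine Equiv.ofBijective
    (fun c => ⟨fun i => c.1 (i + 1) + 1 - c.1 i, ?_⟩) ⟨?_, ?_⟩
  · -- sum = d
    obtain ⟨h1, h2, h3, h4⟩ := c.2
    have key : ∑ i : ZMod d, (c.1 (i + 1) + 1 - c.1 i) + ∑ i : ZMod d, c.1 i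
        = ∑ i : ZMod d, c.1 i + d := by
      rw [← Finset.sum_add_distrib]
      have hpt : ∀ i : ZMod d, (c.1 (i + 1) + 1 - c.1 i) + c.1 i = c.1 (i + 1) + 1 := by
        intro i; have := h2 i; omega
      rw [Finset.sum_congr rfl (fun i _ => hpt i), Finset.sum_add_distrib]
      have hre : ∑ i : ZMod d, c.1 (i + 1) = ∑ i : ZMod d, c.1 i :=
        Fintype.sum_equiv (Equiv.addRight (1 : ZMod d)) _ _ (fun i => rfl)
      rw [hre]
      simp [ZMod.card]
    simp only at key ⊢
    omega
  · -- injective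
    intro c c' h
    have h' : ∀ i, c.1 (i + 1) + 1 - c.1 i = c'.1 (i + 1) + 1 - c'.1 i :=
      fun i => congrFun (congrArg Subtype.val h) i
    obtain ⟨h1, h2, h3, h4⟩ := c.2
    obtain ⟨h1', h2', h3', h4'⟩ := c'.2
    set g : ZMod d → ℤ := fun i => (c'.1 i : ℤ) - c.1 i with hg
    have hstep : ∀ i, g (i + 1) = g i := by
      intro i
      have := h' i
      have hb := h2 i
      have hb' := h2' i
      simp only [hg]
      omega
    have hconst : ∀ i, g i = g 0 := by
      have aux : ∀ k : ℕ, g ((k : ℕ) : ZMod d) = g 0 := by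
        intro k
        induction k with
        | zero => simp
        | succ k ih => rw [Nat.cast_add, Nat.cast_one, hstep, ih]
      intro i
      rw [← ZMod.natCast_zmod_val i, aux]
    obtain ⟨i0, hi0⟩ := h4
    obtain ⟨i1, hi1⟩ := h4'
    have e0 := hconst i0
    have e1 := hconst i1
    have b0 := h3' i0
    have b1 := h3 i1
    apply Subtype.ext
    funext i
    have := hconst i
    simp only [hg] at this e0 e1
    omega
  · -- surjective
    rintro ⟨a, ha⟩
    set q : ZMod d → ℤ := fun i => ∑ j ∈ Finset.range i.val, ((a (j : ZMod d) : ℤ) - 1) with hqdef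
    have htot : ∑ j ∈ Finset.range d, ((a (j : ZMod d) : ℤ) - 1) = 0 := by
      rw [sum_univ_zmod (fun x => ((a x : ℤ) - 1))]
      rw [Finset.sum_sub_distrib]
      simp [ZMod.card, ← Nat.cast_sum, ha]
    have hq : ∀ i : ZMod d, q (i + 1) + 1 = q i + a i := by
      intro i
      have hiv : i.val < d := ZMod.val_lt i
      rcases Nat.lt_or_ge (i.val + 1) d with hlt | hge
      · have hv : (i + 1).val = i.val + 1 := by rw [hval, Nat.mod_eq_of_lt hlt]
        simp only [hqdef, hv, Finset.sum_range_succ, ZMod.natCast_zmod_val]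
        ring
      · have hd1 : i.val + 1 = d := by omega
        have hv : (i + 1).val = 0 := by rw [hval, hd1, Nat.mod_self]
        have hsplit : ∑ j ∈ Finset.range (i.val + 1), ((a (j : ZMod d) : ℤ) - 1)
            = q i + ((a ((i.val : ℕ) : ZMod d) : ℤ) - 1) := Finset.sum_range_succ _ _
        rw [hd1, htot] at hsplit
        rw [ZMod.natCast_zmod_val] at hsplit
        simp only [hqdef, hv, Finset.sum_range_zero] at hsplit ⊢
        omega
    have hne : (Finset.univ.image q).Nonempty :=
      ⟨q 0, Finset.mem_image_of_mem q (Finset.mem_univ 0)⟩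
    set M := (Finset.univ.image q).min' hne with hM
    have hMle : ∀ i, M ≤ q i :=
      fun i => Finset.min'_le _ _ (Finset.mem_image_of_mem q (Finset.mem_univ i))
    obtain ⟨i0, _, hi0⟩ := Finset.mem_image.1 ((Finset.univ.image q).min'_mem hne)
    set c : ZMod d → ℕ := fun i => (q i - M).toNat + (m + 2) with hc
    have hcz : ∀ i, (c i : ℤ) = q i - M + (m + 2) := by
      intro i
      simp only [hc]
      push_cast [Int.toNat_of_nonneg (sub_nonneg.2 (hMle i))]
      ring
    refine ⟨⟨c, ?_, ?_, ?_, ⟨i0, ?_⟩⟩, ?_⟩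
    · intro i; simp only [hc]; omega
    · intro i
      have h5 := hq i
      have h6 := hcz i
      have h7 := hcz (i + 1)
      have h8 : (0 : ℤ) ≤ a i := Int.natCast_nonneg _
      omega
    · intro i; simp only [hc]; omega
    · simp only [hc, hi0]; omega
    · apply Subtype.ext
      funext i
      have h5 := hq i
      have h6 := hcz i
      have h7 := hcz (i + 1)
      simp only []
      omega

lemma cardS (d m : ℕ) (hd : 0 < d) : Nat.card (S d m) = (d + d - 1).choose d := by
  haveI : NeZero d := ⟨hd.ne'⟩
  rw [Nat.card_congr (equivSteps d m), card_sum_eq, ZMod.card]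

lemma finiteS (d m : ℕ) (hd : 0 < d) : Finite (S d m) := by
  haveI : NeZero d := ⟨hd.ne'⟩
  exact Finite.of_equiv _ ((equivSteps d m).trans (equivSym (ZMod d) d)).symm

/-! ### The rotation action -/

instance vaddS (n m : ℕ) : VAdd (ZMod n) (S n m) :=
  ⟨fun t c => ⟨fun i => c.1 (i + t), by
    obtain ⟨h1, h2, h3, h4⟩ := c.2
    refine ⟨fun i => h1 _, fun i => ?_, fun i => h3 _, ?_⟩
    · show c.1 (i + t) ≤ c.1 (i + 1 + t) + 1
      rw [show i + 1 + t = i + t + 1 by ring]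
      exact h2 (i + t)
    · obtain ⟨i, hi⟩ := h4
      refine ⟨i - t, ?_⟩
      show c.1 (i - t + t) = m + 2
      rw [sub_add_cancel]
      exact hi⟩⟩

instance actS (n m : ℕ) : AddAction (ZMod n) (S n m) where
  zero_vadd c := Subtype.ext (funext fun i => by
    show c.1 (i + 0) = c.1 i
    rw [add_zero])
  add_vadd s t c := Subtype.ext (funext fun i => by
    show c.1 (i + (s + t)) = c.1 (i + s + t)
    rw [add_assoc])

lemma vadd_apply {n m : ℕ} (t : ZMod n) (c : S n m) (i : ZMod n) :
    (t +ᵥ c).1 i = c.1 (i + t) := rfl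

/-- The subgroup of shifts fixing a function. -/
def stab {n : ℕ} (c : ZMod n → ℕ) : AddSubgroup (ZMod n) where
  carrier := {s | ∀ i, c (i + s) = c i}
  zero_mem' := by intro i; simp
  add_mem' := by
    intro a b ha hb i
    rw [← add_assoc, hb, ha]
  neg_mem' := by
    intro a ha i
    have := ha (i + -a)
    rw [neg_add_cancel_right] at this
    exact this.symm

lemma gcd_mem_stab {n : ℕ} [NeZero n] (c : ZMod n → ℕ) (t : ZMod n) (ht : t ∈ stab c) :
    ((Nat.gcd t.val n : ℕ) : ZMod n) ∈ stab c := by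
  have hbez : (Nat.gcd t.val n : ℤ) = t.val * Nat.gcdA t.val n + n * Nat.gcdB t.val n :=
    Nat.gcd_eq_gcd_ab t.val n
  have hc : ((Nat.gcd t.val n : ℕ) : ZMod n) = ((t.val : ℕ) : ZMod n) *
      ((Nat.gcdA t.val n : ℤ) : ZMod n) + ((n : ℕ) : ZMod n) * ((Nat.gcdB t.val n : ℤ) : ZMod n) := by
    exact_mod_cast congrArg (fun z : ℤ => (z : ZMod n)) hbez
  rw [ZMod.natCast_self, zero_mul, add_zero, ZMod.natCast_zmod_val, mul_comm,
    ← zsmul_eq_mul] at hc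
  rw [hc]
  exact AddSubgroup.zsmul_mem _ ht _

lemma stab_factor {n d : ℕ} [NeZero n] [NeZero d] (hdn : d ∣ n) (c : ZMod n → ℕ)
    (hd : ((d : ℕ) : ZMod n) ∈ stab c) (x y : ZMod n)
    (hxy : ZMod.castHom hdn (ZMod d) x = ZMod.castHom hdn (ZMod d) y) : c x = c y := by
  set π := ZMod.castHom hdn (ZMod d)
  have hsub : π (x - y) = 0 := by rw [map_sub, hxy, sub_self]
  have hval : (((x - y).val : ℕ) : ZMod d) = 0 := by
    rw [← hsub, ZMod.castHom_apply, ← ZMod.natCast_val]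
  have hdvd : d ∣ (x - y).val := (ZMod.natCast_eq_zero_iff _ _).1 hval
  obtain ⟨k, hk⟩ := hdvd
  have hmem : x - y ∈ stab c := by
    have h2 : ((d * k : ℕ) : ZMod n) = k • ((d : ℕ) : ZMod n) := by
      rw [nsmul_eq_mul]
      push_cast
      ring
    have h3 : x - y = k • ((d : ℕ) : ZMod n) := by
      rw [← ZMod.natCast_zmod_val (x - y), hk, h2]
    rw [h3]
    exact AddSubgroup.nsmul_mem _ hd _
  have := hmem (y)
  rw [show y + (x - y) = x by ring] at this
  exact this


lemma vadd_eq_iff {n m : ℕ} (t : ZMod n) (a b : S n m) :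
    t +ᵥ a = b ↔ ∀ i, b.1 i = a.1 (i + t) := by
  rw [Subtype.ext_iff, funext_iff]
  exact ⟨fun h i => (h i).symm, fun h i => (h i).symm⟩

lemma card_fixedBy (n m : ℕ) [NeZero n] (t : ZMod n) :
    Nat.card (AddAction.fixedBy (S n m) t) = Nat.card (S (Nat.gcd t.val n) m) := by
  set d := Nat.gcd t.val n with hdd
  have hd0 : 0 < d := Nat.gcd_pos_of_pos_right _ (Nat.pos_of_ne_zero (NeZero.ne n))
  haveI : NeZero d := ⟨hd0.ne'⟩
  have hdn : d ∣ n := Nat.gcd_dvd_right _ _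
  have hdt : d ∣ t.val := Nat.gcd_dvd_left _ _
  set π := ZMod.castHom hdn (ZMod d) with hπ
  set σ : ZMod d → ZMod n := fun j => ((j.val : ℕ) : ZMod n) with hσ
  have hπσ : ∀ j, π (σ j) = j := by
    intro j
    simp only [hσ, map_natCast]
    exact ZMod.natCast_zmod_val j
  have hπt : π t = 0 := by
    rw [hπ, ZMod.castHom_apply, ← ZMod.natCast_val]
    exact (ZMod.natCast_eq_zero_iff _ _).2 hdt
  set Φ : S d m → AddAction.fixedBy (S n m) t := fun c' =>
    ⟨⟨fun i => c'.1 (π i), by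
      obtain ⟨h1, h2, h3, h4⟩ := c'.2
      refine ⟨fun i => h1 _, fun i => ?_, fun i => h3 _, ?_⟩
      · show c'.1 (π i) ≤ c'.1 (π (i + 1)) + 1
        rw [map_add, map_one]
        exact h2 (π i)
      · obtain ⟨j, hj⟩ := h4
        refine ⟨σ j, ?_⟩
        show c'.1 (π (σ j)) = m + 2
        rw [hπσ]
        exact hj⟩, by
      rw [AddAction.mem_fixedBy, vadd_eq_iff]
      intro i
      show c'.1 (π i) = c'.1 (π (i + t))
      rw [map_add, hπt, add_zero]⟩ with hΦ
  have hbij : Function.Bijective Φ := by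
    constructor
    · intro c' c'' h
      have h2 : ∀ i, c'.1 (π i) = c''.1 (π i) :=
        fun i => congrFun (congrArg (fun x => (Subtype.val (Subtype.val x))) h) i
      apply Subtype.ext
      funext j
      have := h2 (σ j)
      rwa [hπσ] at this
    · rintro ⟨⟨c, hc⟩, hfix⟩
      have ht : t ∈ stab c := by
        rw [AddAction.mem_fixedBy, vadd_eq_iff] at hfix
        intro i
        exact (hfix i).symm
      have hdmem : ((d : ℕ) : ZMod n) ∈ stab c := gcd_mem_stab c t ht
      have hfac : ∀ x y, π x = π y → c x = c y := fun x y h => stab_factor hdn c hdmem x y h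
      have hcomp : ∀ x, c (σ (π x)) = c x := fun x => hfac _ _ (by rw [hπσ])
      obtain ⟨h1, h2, h3, h4⟩ := hc
      refine ⟨⟨fun j => c (σ j), ⟨fun j => h1 _, fun j => ?_, fun j => h3 _, ?_⟩⟩, ?_⟩
      · show c (σ j) ≤ c (σ (j + 1)) + 1
        have e : c (σ (j + 1)) = c (σ j + 1) := by
          apply hfac
          rw [hπσ, map_add, map_one, hπσ]
        rw [e]
        exact h2 (σ j)
      · obtain ⟨i, hi⟩ := h4
        exact ⟨π i, by show c (σ (π i)) = m + 2; rw [hcomp]; exact hi⟩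
      · apply Subtype.ext
        apply Subtype.ext
        funext i
        exact hcomp i
  exact (Nat.card_congr (Equiv.ofBijective Φ hbij)).symm

noncomputable def quot_equiv_orbit (n m : ℕ) :
    Quot (fun (a b : S n m) => ∃ t : ZMod n, ∀ i, b.1 i = a.1 (i + t))
      ≃ AddAction.orbitRel.Quotient (ZMod n) (S n m) := by
  apply Quot.congr (Equiv.refl _)
  intro a b
  simp only [Equiv.refl_apply]
  constructor
  · rintro ⟨t, ht⟩
    show a ∈ AddAction.orbit (ZMod n) b
    have hb : t +ᵥ a = b := (vadd_eq_iff t a b).2 ht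
    refine ⟨-t, ?_⟩
    show (-t) +ᵥ b = a
    rw [← hb, ← add_vadd, neg_add_cancel, zero_vadd]
  · rintro ⟨t, ht⟩
    have ht' : t +ᵥ b = a := ht
    refine ⟨-t, (vadd_eq_iff (-t) a b).1 ?_⟩
    rw [← ht', ← add_vadd, neg_add_cancel, zero_vadd]

lemma burnside (n m : ℕ) [NeZero n] :
    Nat.card (Quot (fun (a b : S n m) => ∃ t : ZMod n, ∀ i, b.1 i = a.1 (i + t))) * n
      = ∑ t : ZMod n, Nat.card (AddAction.fixedBy (S n m) t) := by
  haveI : Finite (S n m) := finiteS n m (Nat.pos_of_ne_zero (NeZero.ne n))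
  letI : Fintype (S n m) := Fintype.ofFinite _
  letI instF : ∀ t : ZMod n, Fintype (AddAction.fixedBy (S n m) t) := fun t => Fintype.ofFinite _
  letI instQ : Fintype (AddAction.orbitRel.Quotient (ZMod n) (S n m)) := Fintype.ofFinite _
  have hB := AddAction.sum_card_fixedBy_eq_card_orbits_mul_card_addGroup (ZMod n) (S n m)
  rw [ZMod.card] at hB
  have e1 : Nat.card (Quot (fun (a b : S n m) => ∃ t : ZMod n, ∀ i, b.1 i = a.1 (i + t)))
      = Fintype.card (AddAction.orbitRel.Quotient (ZMod n) (S n m)) := by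
    rw [Nat.card_congr (quot_equiv_orbit n m), Nat.card_eq_fintype_card]
  rw [e1, ← hB]
  exact Finset.sum_congr rfl (fun t _ => (Nat.card_eq_fintype_card).symm)

lemma card_gcd_eq (n d : ℕ) (hn : 0 < n) (hd : d ∣ n) :
    ((Finset.range n).filter (fun t => Nat.gcd t n = d)).card = (n / d).totient := by
  have hd0 : 0 < d := Nat.pos_of_dvd_of_pos hd hn
  rw [Nat.totient]
  apply Finset.card_nbij' (i := fun t => t / d) (j := fun y => y * d)
  · intro t htm
    rw [Finset.mem_coe, Finset.mem_filter] at htm ⊢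
    obtain ⟨htr, htg⟩ := htm
    rw [Finset.mem_range] at htr
    have hdt : d ∣ t := htg ▸ Nat.gcd_dvd_left t n
    constructor
    · exact Finset.mem_range.2 (Nat.div_lt_div_of_lt_of_dvd hd htr)
    · have := Nat.coprime_div_gcd_div_gcd (m := t) (n := n) (htg ▸ hd0)
      rw [htg] at this
      exact this.symm
  · intro y hym
    beta_reduce
    rw [Finset.mem_coe, Finset.mem_filter] at hym ⊢
    obtain ⟨hyr, hyc⟩ := hym
    rw [Finset.mem_range] at hyr
    obtain ⟨e, he⟩ := hd
    constructor
    · rw [Finset.mem_range]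
      have : n / d = e := by rw [he, Nat.mul_div_cancel_left _ hd0]
      rw [this] at hyr
      calc y * d < e * d := by exact (Nat.mul_lt_mul_right hd0).2 hyr
      _ = n := by rw [he, mul_comm]
    · have hnd : n / d = e := by rw [he, Nat.mul_div_cancel_left _ hd0]
      rw [hnd] at hyc
      rw [he]
      have : Nat.gcd (y * d) (d * e) = d * Nat.gcd y e := by
        rw [mul_comm y d, Nat.gcd_mul_left]
      rw [this, Nat.Coprime.gcd_eq_one hyc.symm, mul_one]
  · intro t htm
    rw [Finset.mem_coe, Finset.mem_filter] at htm
    have hdt : d ∣ t := htm.2 ▸ Nat.gcd_dvd_left t n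
    exact Nat.div_mul_cancel hdt
  · intro y _
    beta_reduce
    rw [mul_comm]
    exact Nat.mul_div_cancel_left y hd0

lemma sum_gcd (n : ℕ) [NeZero n] (f : ℕ → ℕ) :
    ∑ t : ZMod n, f (Nat.gcd (ZMod.val t) n) = ∑ d ∈ n.divisors, (n / d).totient * f d := by
  have hn : 0 < n := Nat.pos_of_ne_zero (NeZero.ne n)
  have e1 : ∑ t : ZMod n, f (Nat.gcd (ZMod.val t) n)
      = ∑ t ∈ Finset.range n, f (Nat.gcd t n) := by
    symm
    apply Finset.sum_nbij' (i := fun j => ((j : ℕ) : ZMod n)) (j := fun i => i.val)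
    · intro x _; exact Finset.mem_univ _
    · intro x _; exact Finset.mem_range.2 (ZMod.val_lt x)
    · intro x hx; rw [ZMod.val_natCast, Nat.mod_eq_of_lt (Finset.mem_range.1 hx)]
    · intro x _; exact ZMod.natCast_zmod_val x
    · intro x hx; rw [ZMod.val_natCast, Nat.mod_eq_of_lt (Finset.mem_range.1 hx)]
  rw [e1]
  have e2 := Finset.sum_fiberwise_of_maps_to' (s := Finset.range n) (t := n.divisors)
    (g := fun t => Nat.gcd t n) (f := fun d => f d) ?_
  · rw [← e2]
    apply Finset.sum_congr rfl
    intro d hd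
    rw [Finset.sum_const, smul_eq_mul, card_gcd_eq n d hn (Nat.mem_divisors.1 hd).1]
  · intro t _
    exact Nat.mem_divisors.2 ⟨Nat.gcd_dvd_right t n, hn.ne'⟩

lemma two_choose (d : ℕ) (hd : 0 < d) :
    2 * ((d + d - 1).choose d) = (2 * d).choose d := by
  obtain ⟨e, rfl⟩ := Nat.exists_eq_succ_of_ne_zero hd.ne'
  have h1 : e + 1 + (e + 1) - 1 = 2 * e + 1 := by ring_nf; omega
  have h2 : 2 * (e + 1) = (2 * e + 1) + 1 := by ring
  rw [h1, h2]
  have h4 : (2 * e + 1).choose e = (2 * e + 1).choose (e + 1) := by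
    have := Nat.choose_symm (n := 2 * e + 1) (k := e + 1) (by omega)
    rw [show 2 * e + 1 - (e + 1) = e by omega] at this
    exact this
  rw [Nat.choose_succ_succ' (2 * e + 1) e, h4, two_mul]

lemma key (n m : ℕ) (hn : 0 < n) :
    Nat.card (Quot (fun (a b : S n m) => ∃ t : ZMod n, ∀ i, b.1 i = a.1 (i + t))) * (n * 2)
      = ∑ k ∈ n.divisors, (n / k).totient * ((2 * k).choose k) := by
  haveI : NeZero n := ⟨hn.ne'⟩
  have hb := burnside n m
  have e1 : ∑ t : ZMod n, Nat.card (AddAction.fixedBy (S n m) t)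
      = ∑ t : ZMod n, (fun d => (d + d - 1).choose d) (Nat.gcd (ZMod.val t) n) := by
    apply Finset.sum_congr rfl
    intro t _
    rw [card_fixedBy n m t, cardS _ m (Nat.gcd_pos_of_pos_right _ hn)]
  rw [e1, sum_gcd n (fun d => (d + d - 1).choose d)] at hb
  have : Nat.card (Quot (fun (a b : S n m) => ∃ t : ZMod n, ∀ i, b.1 i = a.1 (i + t))) * (n * 2)
      = (∑ d ∈ n.divisors, (n / d).totient * ((d + d - 1).choose d)) * 2 := by
    rw [← hb]; ring
  rw [this, Finset.sum_mul]
  apply Finset.sum_congr rfl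
  intro d hd
  have hd0 : 0 < d := Nat.pos_of_mem_divisors hd
  rw [mul_assoc, mul_comm ((d + d - 1).choose d) 2, two_choose d hd0]

/-- For any `m ≥ 0`, the number of `n`-CNakayama algebras whose Kupisch
series (a cyclic sequence `c : ZMod n → ℕ` with `c i ≥ 2` and `c i ≤ c (i+1) + 1`,
considered up to cyclic rotation) has minimal entry `m + 2` equals the number of balanced
binary `n`-necklaces, namely `(1/(2n)) * ∑_{k ∣ n} φ(n/k) * binomial (2k) k`. -/
theorem cnakayama_min_entry_count (n m : ℕ) (hn : 0 < n) :
    (Nat.card (Quot (fun (a b : {c : ZMod n → ℕ // (∀ i, 2 ≤ c i) ∧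
          (∀ i, c i ≤ c (i + 1) + 1) ∧ (∀ i, m + 2 ≤ c i) ∧ ∃ i, c i = m + 2}) =>
        ∃ t : ZMod n, ∀ i, b.1 i = a.1 (i + t))) : ℚ) =
      (1 : ℚ) / (2 * n) *
        ∑ k ∈ n.divisors, ((n / k).totient : ℚ) * ((2 * k).choose k : ℚ) := by
  have h := key n m hn
  have h' : (Nat.card (Quot (fun (a b : S n m) => ∃ t : ZMod n, ∀ i, b.1 i = a.1 (i + t))) : ℚ)
      * (n * 2) = ∑ k ∈ n.divisors, ((n / k).totient : ℚ) * ((2 * k).choose k : ℚ) := by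
    exact_mod_cast h
  have hn0 : (n : ℚ) ≠ 0 := Nat.cast_ne_zero.2 hn.ne'
  have h2 : (1:ℚ) / (2 * n) *
      ((Nat.card (Quot (fun (a b : S n m) => ∃ t : ZMod n, ∀ i, b.1 i = a.1 (i + t))) : ℚ)
        * (n * 2)) =
      (Nat.card (Quot (fun (a b : S n m) => ∃ t : ZMod n, ∀ i, b.1 i = a.1 (i + t))) : ℚ) := by
    have hpos : (2 : ℚ) * n ≠ 0 := mul_ne_zero two_ne_zero hn0
    rw [div_mul_eq_mul_div, one_mul, div_eq_iff hpos]
    ring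
  rw [← h', h2]

end Nak
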